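/- Let M and N be monoids, let A be a right M-act, and let B be a right N-act. If the wreath product A≀B is a finitely presented 𝒲(M,N|A)-act, then A is a finitely presented M-act and B is a finitely presented N-act. -/

import Mathlib

/-- The axioms for a right action of a monoid `M` on a set `A`:
`act a 1 = a` and `act a (m * n) = act (act a m) n`. -/
def IsAct {M A : Type*} [Monoid M] (act : A → M → A) : Prop :=
  (∀ a, act a 1 = a) ∧ ∀ a m n, act a (m * n) = act (act a m) n

/-- `U ⊆ A` is a generating set for the act `(A, act)`: every element of `A`
has the form `u m` with `u ∈ U`, `m ∈ M`. -/
def Generates {M A : Type*} (act : A → M → A) (U : Set A) : Prop :=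
  ∀ a : A, ∃ u ∈ U, ∃ m : M, act u m = a

/-- An act is finitely generated if it has a finite generating set. -/
def ActFG {M A : Type*} (act : A → M → A) : Prop :=
  ∃ U : Set A, U.Finite ∧ Generates act U

/-- The free `M`-act on a set `X`: the set `X × M` with action `(x, m) n = (x, m n)`. -/
def FreeAct (M : Type*) [Monoid M] (X : Type*) : X × M → M → X × M :=
  fun p m => (p.1, p.2 * m)

/-- The congruence on the act `(A, act)` generated by a set `R ⊆ A × A`:
the smallest equivalence relation containing `R` that is compatible with the action. -/
def CongGen {M A : Type*} (act : A → M → A) (R : Set (A × A)) (a b : A) : Prop :=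
  ∀ r : A → A → Prop, Equivalence r →
    (∀ x y (m : M), r x y → r (act x m) (act y m)) →
    (∀ p ∈ R, r p.1 p.2) → r a b

/-- An `M`-act `(A, act)` is finitely presented if it is defined by a presentation
`⟨X | R⟩` with `X` and `R` finite, i.e. there is a surjective `M`-equivariant map
`π : F_X → A` whose kernel is the congruence on `F_X` generated by `R`. -/
def ActFP (M : Type*) [Monoid M] {A : Type*} (act : A → M → A) : Prop :=
  ∃ (X : Type) (_ : Finite X) (R : Set ((X × M) × (X × M))), R.Finite ∧
    ∃ π : X × M → A, Function.Surjective π ∧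
      (∀ p m, π (FreeAct M X p m) = act (π p) m) ∧
      ∀ w₁ w₂ : X × M, π w₁ = π w₂ ↔ CongGen (FreeAct M X) R w₁ w₂

/-- The diagonal `M`-act: `M × M` with action `(a, b) c = (a c, b c)`. -/
def DiagAct (M : Type*) [Monoid M] : M × M → M → M × M :=
  fun p c => (p.1 * c, p.2 * c)

/-- The action of the wreath product monoid `𝒲(M, N | A)` (carried on `M × (A → N)`)
on the wreath product `A ≀ B` (carried on `A × B`): `(a, b)(m, θ) = (a m, b (a θ))`. -/
def WreathAct {M N A B : Type*} (actA : A → M → A) (actB : B → N → B) :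
    A × B → M × (A → N) → A × B :=
  fun p w => (actA p.1 w.1, actB p.2 (w.2 p.1))

/-- The multiplication of the wreath product monoid `𝒲(M, N | A)` on `M × (A → N)`:
`(m, θ)(n, φ) = (m n, θ · ᵐφ)`, where `a (θ · ᵐφ) = (a θ) ((a m) φ)`. -/
def wreathMul {M N A : Type*} [Monoid M] [Monoid N] (act : A → M → A) :
    M × (A → N) → M × (A → N) → M × (A → N) :=
  fun p q => (p.1 * q.1, fun a => p.2 a * q.2 (act a p.1))

/-- The wreath product monoid `𝒲(M, N | A)` of `M` by `N` through the `M`-act `A`,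
carried on the set `M × N^A`, with identity `(1_M, c_{1_N})`. -/
def WreathMonoid {M N A : Type*} [Monoid M] [Monoid N] (act : A → M → A)
    (hact : IsAct act) : Monoid (M × (A → N)) where
  mul := wreathMul act
  one := (1, fun _ => 1)
  npow := fun n x => @npowRec _ ⟨(1, fun _ => 1)⟩ ⟨wreathMul act⟩ n x
  npow_zero := fun _ => rfl
  npow_succ := fun _ _ => rfl
  mul_assoc := by
    rintro ⟨m, θ⟩ ⟨n, φ⟩ ⟨k, ψ⟩
    show wreathMul act (wreathMul act _ _) _ = wreathMul act _ (wreathMul act _ _)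
    simp [wreathMul, mul_assoc, hact.2]
  one_mul := by
    rintro ⟨m, θ⟩
    show wreathMul act (1, fun _ => 1) _ = _
    simp [wreathMul, hact.1]
  mul_one := by
    rintro ⟨m, θ⟩
    show wreathMul act _ (1, fun _ => 1) = _
    simp [wreathMul]

section CongGenLemmas

variable {M A : Type*}

theorem stmt18_congGen_refl (act : A → M → A) (R : Set (A × A)) (a : A) :
    CongGen act R a a := fun _ hr _ _ => hr.refl a

theorem stmt18_congGen_symm {act : A → M → A} {R : Set (A × A)} {a b : A}
    (h : CongGen act R a b) : CongGen act R b a :=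
  fun r hr hc hR => hr.symm (h r hr hc hR)

theorem stmt18_congGen_trans {act : A → M → A} {R : Set (A × A)} {a b c : A}
    (h1 : CongGen act R a b) (h2 : CongGen act R b c) : CongGen act R a c :=
  fun r hr hc hR => hr.trans (h1 r hr hc hR) (h2 r hr hc hR)

theorem stmt18_congGen_act {act : A → M → A} {R : Set (A × A)} {a b : A} (m : M)
    (h : CongGen act R a b) : CongGen act R (act a m) (act b m) :=
  fun r hr hc hR => hc _ _ m (h r hr hc hR)

theorem stmt18_congGen_of_mem {act : A → M → A} {R : Set (A × A)} {p : A × A}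
    (hp : p ∈ R) : CongGen act R p.1 p.2 :=
  fun _ _ _ hR => hR p hp

end CongGenLemmas

/-- Finite presentability is independent of the chosen finite generating map:
if `π : X × W → C` is a finite presentation of the `W`-act `C` (with action `act`),
and `σ : Y × W → C` is any surjective equivariant map with `Y` finite, then the
kernel of `σ` is also generated by a finite set of relations. -/
theorem stmt18_transfer {W C : Type*} [Monoid W] (act : C → W → C)
    {X Y : Type*} [Finite Y]
    (R : Set ((X × W) × (X × W))) (hR : R.Finite)
    (π : X × W → C) (hπs : Function.Surjective π)
    (hπe : ∀ p w, π (FreeAct W X p w) = act (π p) w)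
    (hπk : ∀ w₁ w₂, π w₁ = π w₂ ↔ CongGen (FreeAct W X) R w₁ w₂)
    (σ : Y × W → C) (hσs : Function.Surjective σ)
    (hσe : ∀ p w, σ (FreeAct W Y p w) = act (σ p) w) :
    ∃ R₂ : Set ((Y × W) × (Y × W)), R₂.Finite ∧
      ∀ w₁ w₂, σ w₁ = σ w₂ ↔ CongGen (FreeAct W Y) R₂ w₁ w₂ := by
  classical
  choose α hα using fun y : Y => hπs (σ (y, 1))
  choose β hβ using fun x : X => hσs (π (x, 1))
  set f : Y × W → X × W := fun p => ((α p.1).1, (α p.1).2 * p.2) with hf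
  set g : X × W → Y × W := fun p => ((β p.1).1, (β p.1).2 * p.2) with hg
  have hfe : ∀ p w, f (FreeAct W Y p w) = FreeAct W X (f p) w := by
    intro p w; simp [hf, FreeAct, mul_assoc]
  have hge : ∀ p w, g (FreeAct W X p w) = FreeAct W Y (g p) w := by
    intro p w; simp [hg, FreeAct, mul_assoc]
  have hπf : ∀ p, π (f p) = σ p := by
    rintro ⟨y, w⟩
    have h1 : f (y, w) = FreeAct W X (α y) w := by simp [hf, FreeAct]
    calc π (f (y, w)) = π (FreeAct W X (α y) w) := by rw [h1]
      _ = act (π (α y)) w := hπe _ _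
      _ = act (σ (y, 1)) w := by rw [hα]
      _ = σ (FreeAct W Y (y, 1) w) := (hσe _ _).symm
      _ = σ (y, w) := by simp [FreeAct]
  have hσg : ∀ p, σ (g p) = π p := by
    rintro ⟨x, w⟩
    have h1 : g (x, w) = FreeAct W Y (β x) w := by simp [hg, FreeAct]
    calc σ (g (x, w)) = σ (FreeAct W Y (β x) w) := by rw [h1]
      _ = act (σ (β x)) w := hσe _ _
      _ = act (π (x, 1)) w := by rw [hβ]
      _ = π (FreeAct W X (x, 1) w) := (hπe _ _).symm
      _ = π (x, w) := by simp [FreeAct]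
  refine ⟨((fun pq : (X × W) × (X × W) => (g pq.1, g pq.2)) '' R) ∪
      ((fun y : Y => ((y, (1 : W)), g (f (y, 1)))) '' Set.univ),
    (hR.image _).union (Set.finite_univ.image _), ?_⟩
  set R₂ : Set ((Y × W) × (Y × W)) :=
    ((fun pq : (X × W) × (X × W) => (g pq.1, g pq.2)) '' R) ∪
      ((fun y : Y => ((y, (1 : W)), g (f (y, 1)))) '' Set.univ) with hR₂
  have hgf : ∀ p : Y × W, CongGen (FreeAct W Y) R₂ p (g (f p)) := by
    rintro ⟨y, w⟩
    have h0 : CongGen (FreeAct W Y) R₂ (y, (1 : W)) (g (f (y, 1))) :=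
      stmt18_congGen_of_mem (p := ((y, (1 : W)), g (f (y, 1)))) (Or.inr ⟨y, trivial, rfl⟩)
    have h1 := stmt18_congGen_act w h0
    have e1 : FreeAct W Y ((y : Y), (1 : W)) w = (y, w) := by simp [FreeAct]
    have e2 : FreeAct W Y (g (f (y, 1))) w = g (f (y, w)) := by
      rw [← hge, ← hfe, e1]
    rwa [e1, e2] at h1
  intro u v
  constructor
  · intro huv
    have hf2 : π (f u) = π (f v) := by rw [hπf, hπf, huv]
    have hcg := (hπk _ _).1 hf2
    have key : CongGen (FreeAct W Y) R₂ (g (f u)) (g (f v)) := by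
      refine hcg (fun p q => CongGen (FreeAct W Y) R₂ (g p) (g q))
        ⟨fun p => stmt18_congGen_refl _ _ _, fun h => stmt18_congGen_symm h,
          fun h1 h2 => stmt18_congGen_trans h1 h2⟩
        (fun p q w hpq => by
          show CongGen (FreeAct W Y) R₂ (g (FreeAct W X p w)) (g (FreeAct W X q w))
          rw [hge, hge]; exact stmt18_congGen_act w hpq)
        (fun r hr => stmt18_congGen_of_mem (p := (g r.1, g r.2)) (Or.inl ⟨r, hr, rfl⟩))
    exact stmt18_congGen_trans (hgf u)
      (stmt18_congGen_trans key (stmt18_congGen_symm (hgf v)))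
  · intro hcg
    refine hcg (fun p q => σ p = σ q) ⟨fun _ => rfl, Eq.symm, Eq.trans⟩
      (fun p q w hpq => by
        show σ (FreeAct W Y p w) = σ (FreeAct W Y q w)
        rw [hσe, hσe]; exact congrArg (fun c => act c w) hpq) ?_
    rintro pq (⟨r, hr, rfl⟩ | ⟨y, -, rfl⟩)
    · have h2 : π r.1 = π r.2 := (hπk _ _).2 (stmt18_congGen_of_mem hr)
      show σ (g r.1) = σ (g r.2)
      rw [hσg, hσg, h2]
    · show σ (y, 1) = σ (g (f (y, 1)))
      rw [hσg, hπf]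

theorem stmt18_abstract {M N A B W : Type*} [Monoid M] [Monoid N] [Monoid W]
    [Nonempty A] [Nonempty B]
    (actA : A → M → A) (actB : B → N → B) (hA : IsAct actA) (hB : IsAct actB)
    (c1 : W → M) (c2 : W → A → N) (pr : M → (A → N) → W)
    (hc1p : ∀ m θ, c1 (pr m θ) = m)
    (hc2p : ∀ m θ, c2 (pr m θ) = θ)
    (hc1m : ∀ w w' : W, c1 (w * w') = c1 w * c1 w')
    (hc2m : ∀ (w w' : W) (a : A), c2 (w * w') a = c2 w a * c2 w' (actA a (c1 w)))
    (wact : A × B → W → A × B)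
    (hwact : ∀ p w, wact p w = (actA p.1 (c1 w), actB p.2 (c2 w p.1)))
    (h : ActFP W wact) :
    ActFP M actA ∧ ActFP N actB := by
  classical
  obtain ⟨X, hXfin, R, hRfin, π, hπs, hπe, hπk⟩ := h
  haveI := hXfin
  have hactm : ∀ (p : A × B) (w w' : W),
      wact p (w * w') = wact (wact p w) w' := by
    intro p w w'
    simp only [hwact]
    rw [Prod.mk.injEq]
    exact ⟨by rw [hc1m]; exact hA.2 _ _ _, by rw [hc2m]; exact hB.2 _ _ _⟩
  have hπ1 : ∀ (x : X) (w : W), π (x, w) = wact (π (x, 1)) w := by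
    intro x w
    have h1 := hπe (x, 1) w
    have h2 : FreeAct W X (x, 1) w = (x, w) := by
      show (x, 1 * w) = (x, w); rw [one_mul]
    rw [h2] at h1; exact h1
  set aOf : X → A := fun x => (π (x, 1)).1 with haOf
  set bOf : X → B := fun x => (π (x, 1)).2 with hbOf
  set P : (X × X) × W → A × B :=
    fun p => wact (aOf p.1.1, bOf p.1.2) p.2 with hP
  have hPfst : ∀ p, (P p).1 = actA (aOf p.1.1) (c1 p.2) := by
    intro p; simp only [hP, hwact]
  have hPsnd : ∀ p, (P p).2 = actB (bOf p.1.2) (c2 p.2 (aOf p.1.1)) := by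
    intro p; simp only [hP, hwact]
  have hgenA : ∀ a : A, ∃ (x : X) (m : M), actA (aOf x) m = a := by
    intro a
    obtain ⟨⟨x, w⟩, hx⟩ := hπs (a, Classical.arbitrary B)
    rw [hπ1, hwact] at hx
    exact ⟨x, c1 w, congrArg Prod.fst hx⟩
  have hgenB : ∀ b : B, ∃ (y : X) (ν : N), actB (bOf y) ν = b := by
    intro b
    obtain ⟨⟨y, w⟩, hy⟩ := hπs (Classical.arbitrary A, b)
    rw [hπ1, hwact] at hy
    exact ⟨y, c2 w (aOf y), congrArg Prod.snd hy⟩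
  have hPs : Function.Surjective P := by
    rintro ⟨a, b⟩
    obtain ⟨x, m, hx⟩ := hgenA a
    obtain ⟨y, ν, hy⟩ := hgenB b
    refine ⟨((x, y), pr m (fun _ => ν)), ?_⟩
    simp only [hP, hwact, hc1p, hc2p]
    rw [hx, hy]
  have hPe : ∀ (p : (X × X) × W) (w : W),
      P (FreeAct W (X × X) p w) = wact (P p) w := by
    intro p w
    show wact (aOf p.1.1, bOf p.1.2) (p.2 * w) = wact (P p) w
    rw [hactm]
  obtain ⟨R', hR'fin, hk⟩ := stmt18_transfer wact R hRfin π hπs hπe hπk P hPs hPe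
  constructor
  · -- A is finitely presented
    set sA : (X × X) × W → (X × X) × M := fun p => (p.1, c1 p.2) with hsA
    set RA : Set (((X × X) × M) × ((X × X) × M)) :=
      ((fun pq : ((X × X) × W) × ((X × X) × W) => (sA pq.1, sA pq.2)) '' R') ∪
        ((fun t : X × X × X =>
          (((t.1, t.2.1), (1 : M)), ((t.1, t.2.2), (1 : M)))) '' Set.univ) with hRA
    set τ : (X × X) × M → A := fun p => actA (aOf p.1.1) p.2 with hτ
    have hτe : ∀ p m, τ (FreeAct M (X × X) p m) = actA (τ p) m := by
      intro p m
      show actA (aOf p.1.1) (p.2 * m) = actA (actA (aOf p.1.1) p.2) m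
      exact hA.2 _ _ _
    have hτs : Function.Surjective τ := by
      intro a
      obtain ⟨x, m, hx⟩ := hgenA a
      exact ⟨((x, x), m), hx⟩
    have hτP : ∀ p, τ (sA p) = (P p).1 := by
      intro p; rw [hPfst]
    refine ⟨X × X, inferInstance, RA, ?_, τ, hτs, hτe, ?_⟩
    · exact (hR'fin.image _).union (Set.finite_univ.image _)
    intro u v
    constructor
    · obtain ⟨⟨x, y⟩, m⟩ := u
      obtain ⟨⟨x', y'⟩, n⟩ := v
      intro huv
      have step1 : CongGen (FreeAct M (X × X)) RA ((x, y), m) ((x, y'), m) := by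
        have h0 : CongGen (FreeAct M (X × X)) RA ((x, y), (1 : M)) ((x, y'), (1 : M)) :=
          stmt18_congGen_of_mem (p := (((x, y), (1 : M)), ((x, y'), (1 : M))))
            (Or.inr ⟨(x, y, y'), trivial, rfl⟩)
        have h1 := stmt18_congGen_act m h0
        have e1 : FreeAct M (X × X) ((x, y), (1 : M)) m = ((x, y), m) := by
          show ((x, y), 1 * m) = ((x, y), m); rw [one_mul]
        have e2 : FreeAct M (X × X) ((x, y'), (1 : M)) m = ((x, y'), m) := by
          show ((x, y'), 1 * m) = ((x, y'), m); rw [one_mul]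
        rwa [e1, e2] at h1
      have hkey : P ((x, y'), pr m (fun _ => 1)) = P ((x', y'), pr n (fun _ => 1)) := by
        simp only [hP, hwact, hc1p, hc2p]
        have hfst : actA (aOf x) m = actA (aOf x') n := huv
        rw [hfst]
      have hcg := (hk _ _).1 hkey
      have step2 : CongGen (FreeAct M (X × X)) RA ((x, y'), m) ((x', y'), n) := by
        have hproj : CongGen (FreeAct M (X × X)) RA
            (sA ((x, y'), pr m (fun _ => 1))) (sA ((x', y'), pr n (fun _ => 1))) :=
          hcg (fun p q => CongGen (FreeAct M (X × X)) RA (sA p) (sA q))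
            ⟨fun p => stmt18_congGen_refl _ _ _, fun hh => stmt18_congGen_symm hh,
              fun h1 h2 => stmt18_congGen_trans h1 h2⟩
            (fun p q w hpq => by
              show CongGen (FreeAct M (X × X)) RA (sA (FreeAct W (X × X) p w))
                (sA (FreeAct W (X × X) q w))
              have e3 : ∀ r : (X × X) × W, sA (FreeAct W (X × X) r w)
                  = FreeAct M (X × X) (sA r) (c1 w) := by
                intro r
                show (r.1, c1 (r.2 * w)) = (r.1, c1 r.2 * c1 w)
                rw [hc1m]
              rw [e3, e3]
              exact stmt18_congGen_act (c1 w) hpq)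
            (fun r hr => stmt18_congGen_of_mem (p := (sA r.1, sA r.2))
              (Or.inl ⟨r, hr, rfl⟩))
        have e4 : sA ((x, y'), pr m (fun _ => 1)) = ((x, y'), m) := by
          show ((x, y'), c1 (pr m (fun _ => 1))) = ((x, y'), m)
          rw [hc1p]
        have e5 : sA ((x', y'), pr n (fun _ => 1)) = ((x', y'), n) := by
          show ((x', y'), c1 (pr n (fun _ => 1))) = ((x', y'), n)
          rw [hc1p]
        rwa [e4, e5] at hproj
      exact stmt18_congGen_trans step1 step2
    · intro hcg
      refine hcg (fun p q => τ p = τ q) ⟨fun _ => rfl, Eq.symm, Eq.trans⟩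
        (fun p q m hpq => by
          show τ (FreeAct M (X × X) p m) = τ (FreeAct M (X × X) q m)
          rw [hτe, hτe]
          exact congrArg (fun c => actA c m) hpq) ?_
      rintro pq (⟨r, hr, rfl⟩ | ⟨t, -, rfl⟩)
      · show τ (sA r.1) = τ (sA r.2)
        rw [hτP, hτP, (hk _ _).2 (stmt18_congGen_of_mem hr)]
      · show τ ((t.1, t.2.1), (1 : M)) = τ ((t.1, t.2.2), (1 : M))
        rfl
  · -- B is finitely presented
    set tB : (X × X) × W → (X × X) × N := fun p => (p.1, c2 p.2 (aOf p.1.1)) with htB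
    set RB : Set (((X × X) × N) × ((X × X) × N)) :=
      ((fun pq : ((X × X) × W) × ((X × X) × W) => (tB pq.1, tB pq.2)) '' R') ∪
        ((fun t : X × X × X =>
          (((t.2.1, t.1), (1 : N)), ((t.2.2, t.1), (1 : N)))) '' Set.univ) with hRB
    set σB : (X × X) × N → B := fun p => actB (bOf p.1.2) p.2 with hσB
    have hσe : ∀ p ν, σB (FreeAct N (X × X) p ν) = actB (σB p) ν := by
      intro p ν
      show actB (bOf p.1.2) (p.2 * ν) = actB (actB (bOf p.1.2) p.2) ν
      exact hB.2 _ _ _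
    have hσs : Function.Surjective σB := by
      intro b
      obtain ⟨y, ν, hy⟩ := hgenB b
      exact ⟨((y, y), ν), hy⟩
    have hσP : ∀ p, σB (tB p) = (P p).2 := by
      intro p; rw [hPsnd]
    refine ⟨X × X, inferInstance, RB, ?_, σB, hσs, hσe, ?_⟩
    · exact (hR'fin.image _).union (Set.finite_univ.image _)
    intro u v
    constructor
    · obtain ⟨⟨x, y⟩, ν⟩ := u
      obtain ⟨⟨x', y'⟩, μ⟩ := v
      intro huv
      have step1 : CongGen (FreeAct N (X × X)) RB ((x, y), ν) ((x', y), ν) := by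
        have h0 : CongGen (FreeAct N (X × X)) RB ((x, y), (1 : N)) ((x', y), (1 : N)) :=
          stmt18_congGen_of_mem (p := (((x, y), (1 : N)), ((x', y), (1 : N))))
            (Or.inr ⟨(y, x, x'), trivial, rfl⟩)
        have h1 := stmt18_congGen_act ν h0
        have e1 : FreeAct N (X × X) ((x, y), (1 : N)) ν = ((x, y), ν) := by
          show ((x, y), 1 * ν) = ((x, y), ν); rw [one_mul]
        have e2 : FreeAct N (X × X) ((x', y), (1 : N)) ν = ((x', y), ν) := by
          show ((x', y), 1 * ν) = ((x', y), ν); rw [one_mul]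
        rwa [e1, e2] at h1
      have hkey : P ((x', y), pr 1 (fun _ => ν)) = P ((x', y'), pr 1 (fun _ => μ)) := by
        simp only [hP, hwact, hc1p, hc2p]
        have hsnd : actB (bOf y) ν = actB (bOf y') μ := huv
        rw [hsnd]
      have hcg := (hk _ _).1 hkey
      have step2 : CongGen (FreeAct N (X × X)) RB ((x', y), ν) ((x', y'), μ) := by
        have hproj : (fun p q => CongGen (FreeAct N (X × X)) RB (tB p) (tB q) ∧
              (P p).1 = (P q).1)
            ((x', y), pr 1 (fun _ => ν)) ((x', y'), pr 1 (fun _ => μ)) :=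
          hcg (fun p q => CongGen (FreeAct N (X × X)) RB (tB p) (tB q) ∧
              (P p).1 = (P q).1)
            ⟨fun p => ⟨stmt18_congGen_refl _ _ _, rfl⟩,
              fun hh => ⟨stmt18_congGen_symm hh.1, hh.2.symm⟩,
              fun h1 h2 => ⟨stmt18_congGen_trans h1.1 h2.1, h1.2.trans h2.2⟩⟩
            (fun p q w hpq => by
              show CongGen (FreeAct N (X × X)) RB (tB (FreeAct W (X × X) p w))
                  (tB (FreeAct W (X × X) q w)) ∧
                (P (FreeAct W (X × X) p w)).1 = (P (FreeAct W (X × X) q w)).1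
              have e3 : ∀ r : (X × X) × W, tB (FreeAct W (X × X) r w)
                  = FreeAct N (X × X) (tB r) (c2 w ((P r).1)) := by
                intro r
                show (r.1, c2 (r.2 * w) (aOf r.1.1))
                  = (r.1, c2 r.2 (aOf r.1.1) * c2 w ((P r).1))
                rw [hc2m, hPfst]
              constructor
              · rw [e3, e3, hpq.2]
                exact stmt18_congGen_act _ hpq.1
              · rw [hPe, hPe, hwact, hwact]
                show actA (P p).1 (c1 w) = actA (P q).1 (c1 w)
                rw [hpq.2]
            )
            (fun r hr => ⟨stmt18_congGen_of_mem (p := (tB r.1, tB r.2))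
                (Or.inl ⟨r, hr, rfl⟩),
              congrArg Prod.fst ((hk _ _).2 (stmt18_congGen_of_mem hr))⟩)
        have hproj1 : CongGen (FreeAct N (X × X)) RB
            (tB ((x', y), pr 1 (fun _ => ν))) (tB ((x', y'), pr 1 (fun _ => μ))) :=
          hproj.1
        have e4 : tB ((x', y), pr 1 (fun _ => ν)) = ((x', y), ν) := by
          show ((x', y), c2 (pr 1 (fun _ => ν)) (aOf x')) = ((x', y), ν)
          rw [hc2p]
        have e5 : tB ((x', y'), pr 1 (fun _ => μ)) = ((x', y'), μ) := by
          show ((x', y'), c2 (pr 1 (fun _ => μ)) (aOf x')) = ((x', y'), μ)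
          rw [hc2p]
        rwa [e4, e5] at hproj1
      exact stmt18_congGen_trans step1 step2
    · intro hcg
      refine hcg (fun p q => σB p = σB q) ⟨fun _ => rfl, Eq.symm, Eq.trans⟩
        (fun p q ν hpq => by
          show σB (FreeAct N (X × X) p ν) = σB (FreeAct N (X × X) q ν)
          rw [hσe, hσe]
          exact congrArg (fun c => actB c ν) hpq) ?_
      rintro pq (⟨r, hr, rfl⟩ | ⟨t, -, rfl⟩)
      · show σB (tB r.1) = σB (tB r.2)
        rw [hσP, hσP, (hk _ _).2 (stmt18_congGen_of_mem hr)]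
      · show σB ((t.2.1, t.1), (1 : N)) = σB ((t.2.2, t.1), (1 : N))
        rfl

/-- If the wreath product `A ≀ B` is a finitely presented `𝒲(M, N | A)`-act, then `A`
is a finitely presented `M`-act and `B` is a finitely presented `N`-act. -/
theorem stmt18 {M N A B : Type*} [Monoid M] [Monoid N] [Nonempty A] [Nonempty B]
    (actA : A → M → A) (actB : B → N → B) (hA : IsAct actA) (hB : IsAct actB)
    (h : @ActFP (M × (A → N)) (WreathMonoid (N := N) actA hA) (A × B)
      (WreathAct actA actB)) :
    ActFP M actA ∧ ActFP N actB :=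
  @stmt18_abstract M N A B (M × (A → N)) _ _ (WreathMonoid (N := N) actA hA) _ _
    actA actB hA hB Prod.fst Prod.snd Prod.mk
    (fun _ _ => rfl) (fun _ _ => rfl) (fun _ _ => rfl) (fun _ _ _ => rfl)
    (WreathAct actA actB) (fun _ _ => rfl) h
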